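/- The element θ_z = v^{l(y) - l(x)} T_x T_y^{-1} is well defined: if z = x y^{-1} = x' y'^{-1} with x, y, x', y' dominant weights, then v^{l(y)-l(x)} T_x T_y^{-1} = v^{l(y')-l(x')} T_{x'} T_{y'}^{-1}. -/
import Mathlib


open LaurentPolynomial

/-- The Bernstein element `θ_z = v^{ℓ(y)-ℓ(x)} T_x T_y⁻¹` is well defined: it does not
depend on the chosen decomposition `z = x y⁻¹` with `x, y` dominant. -/
theorem theta_well_defined {X H : Type*} [CommGroup X] [Ring H]
    [Algebra (LaurentPolynomial ℤ) H]
    (dom : X → Prop) (len : X → ℕ) (Tmap : X → H)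
    (hdomMul : ∀ x y, dom x → dom y → dom (x * y))
    (hlen : ∀ x y, dom x → dom y → len (x * y) = len x + len y)
    (hTmul : ∀ x y, dom x → dom y → Tmap x * Tmap y = Tmap (x * y))
    (hTunit : ∀ y, dom y → IsUnit (Tmap y)) :
    ∀ x y x' y', dom x → dom y → dom x' → dom y' →
      x * y⁻¹ = x' * y'⁻¹ →
      algebraMap (LaurentPolynomial ℤ) H (T ((len y : ℤ) - (len x : ℤ))) *
          Tmap x * Ring.inverse (Tmap y) =
      algebraMap (LaurentPolynomial ℤ) H (T ((len y' : ℤ) - (len x' : ℤ))) *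
          Tmap x' * Ring.inverse (Tmap y') := by
  intro x y x' y' hx hy hx' hy' heq
  -- From x * y⁻¹ = x' * y'⁻¹ we get x * y' = x' * y
  have hxy : x * y' = x' * y := by
    have h := congrArg (· * (y * y')) heq
    simpa [mul_assoc, mul_comm, mul_left_comm] using h
  -- length relation
  have hlen' : len x + len y' = len x' + len y := by
    have h1 := hlen x y' hx hy'
    have h2 := hlen x' y hx' hy
    rw [hxy, h2] at h1
    omega
  have hscal : (len y : ℤ) - (len x : ℤ) = (len y' : ℤ) - (len x' : ℤ) := by omega
  have huy := hTunit y hy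
  have huy' := hTunit y' hy'
  have hcomm : Tmap y * Tmap y' = Tmap y' * Tmap y := by
    rw [hTmul y y' hy hy', hTmul y' y hy' hy, mul_comm]
  apply (huy.mul huy').mul_right_cancel
  calc algebraMap (LaurentPolynomial ℤ) H (T ((len y : ℤ) - (len x : ℤ))) *
          Tmap x * Ring.inverse (Tmap y) * (Tmap y * Tmap y')
      = algebraMap (LaurentPolynomial ℤ) H (T ((len y : ℤ) - (len x : ℤ))) *
          Tmap x * (Ring.inverse (Tmap y) * Tmap y) * Tmap y' := by
        simp only [mul_assoc]
    _ = algebraMap (LaurentPolynomial ℤ) H (T ((len y : ℤ) - (len x : ℤ))) *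
          Tmap (x * y') := by
        rw [Ring.inverse_mul_cancel _ huy, mul_one, mul_assoc, hTmul x y' hx hy']
    _ = algebraMap (LaurentPolynomial ℤ) H (T ((len y' : ℤ) - (len x' : ℤ))) *
          Tmap (x' * y) := by rw [hscal, hxy]
    _ = algebraMap (LaurentPolynomial ℤ) H (T ((len y' : ℤ) - (len x' : ℤ))) *
          Tmap x' * (Ring.inverse (Tmap y') * Tmap y') * Tmap y := by
        rw [Ring.inverse_mul_cancel _ huy', mul_one, mul_assoc, hTmul x' y hx' hy]
    _ = algebraMap (LaurentPolynomial ℤ) H (T ((len y' : ℤ) - (len x' : ℤ))) *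
          Tmap x' * Ring.inverse (Tmap y') * (Tmap y * Tmap y') := by
        rw [hcomm]; simp only [mul_assoc]
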